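/- A risk measure ρ : 𝒳 → ℝ is star-shaped if and only if there exists a family {𝒜_β}_{β∈B} of convex acceptance sets such that for every X ∈ 𝒳, ρ(X) = min{m ∈ ℝ : X − m ∈ 𝒜_β for some β ∈ B} (the minimum being attained). Similarly, ρ is positively homogeneous if and only if such a family can be chosen with each 𝒜_β a coherent acceptance set (a convex cone acceptance set). -/

import Mathlib

open BoundedContinuousFunction

def IsRiskMeasure {Ω : Type*} [TopologicalSpace Ω] (ρ : (Ω →ᵇ ℝ) → ℝ) : Prop :=
  (∀ X Y : Ω →ᵇ ℝ, Y ≤ X → ρ Y ≤ ρ X) ∧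
  (∀ (X : Ω →ᵇ ℝ) (m : ℝ), ρ (X - const Ω m) = ρ X - m) ∧
  ρ 0 = 0

def IsStarShaped {Ω : Type*} [TopologicalSpace Ω] (ρ : (Ω →ᵇ ℝ) → ℝ) : Prop :=
  ∀ (X : Ω →ᵇ ℝ) (l : ℝ), 1 < l → l * ρ X ≤ ρ (l • X)

def IsPositivelyHomogeneous {Ω : Type*} [TopologicalSpace Ω] (ρ : (Ω →ᵇ ℝ) → ℝ) : Prop :=
  ∀ (X : Ω →ᵇ ℝ) (l : ℝ), 0 < l → ρ (l • X) = l * ρ X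

def IsAcceptanceSet {Ω : Type*} [TopologicalSpace Ω] (A : Set (Ω →ᵇ ℝ)) : Prop :=
  IsLUB {m : ℝ | const Ω m ∈ A} 0 ∧
  ∀ X ∈ A, ∀ Y : Ω →ᵇ ℝ, Y ≤ X → Y ∈ A

/-- A coherent acceptance set is a convex cone. -/
def IsCone {Ω : Type*} [TopologicalSpace Ω] (A : Set (Ω →ᵇ ℝ)) : Prop :=
  ∀ X ∈ A, ∀ c : ℝ, 0 ≤ c → c • X ∈ A

section Aux

variable {Ω : Type*} [TopologicalSpace Ω]

lemma bcf_le_iff {X Y : Ω →ᵇ ℝ} : X ≤ Y ↔ ∀ ω, X ω ≤ Y ω := Iff.rfl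

lemma rho_const (ρ : (Ω →ᵇ ℝ) → ℝ) (hρ : IsRiskMeasure ρ) (m : ℝ) :
    ρ (const Ω m) = m := by
  have h := hρ.2.1 0 (-m)
  have he : (0 : Ω →ᵇ ℝ) - const Ω (-m) = const Ω m := by
    ext ω; simp
  rw [he, hρ.2.2] at h
  linarith

lemma rho_self_sub (ρ : (Ω →ᵇ ℝ) → ℝ) (hρ : IsRiskMeasure ρ) (Z : Ω →ᵇ ℝ) :
    ρ (Z - const Ω (ρ Z)) = 0 := by
  rw [hρ.2.1]; ring

/-- For star-shaped ρ, ρ (t • W) ≤ 0 for t ∈ [0,1] when ρ W = 0. -/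
lemma rho_smul_nonpos (ρ : (Ω →ᵇ ℝ) → ℝ) (hρ : IsRiskMeasure ρ) (hs : IsStarShaped ρ)
    (W : Ω →ᵇ ℝ) (hW : ρ W = 0) {t : ℝ} (ht0 : 0 ≤ t) (ht1 : t ≤ 1) :
    ρ (t • W) ≤ 0 := by
  rcases eq_or_lt_of_le ht0 with h0 | h0
  · rw [← h0, zero_smul, hρ.2.2]
  rcases eq_or_lt_of_le ht1 with h1 | h1
  · rw [h1, one_smul, hW]
  · have hl : 1 < 1 / t := (one_lt_div h0).2 h1
    have := hs (t • W) (1 / t) hl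
    have he : (1 / t) • (t • W) = W := by
      rw [smul_smul, one_div, inv_mul_cancel₀ (ne_of_gt h0), one_smul]
    rw [he, hW] at this
    nlinarith [this]

/-- Common converse lower-bound argument: from family representation,
    ρ X ≤ ρ (l • X) / l + slack. -/
lemma conv_step (ρ : (Ω →ᵇ ℝ) → ℝ)
    (𝒞 : Set (Set (Ω →ᵇ ℝ)))
    (hrep : ∀ X : Ω →ᵇ ℝ, IsLeast {m : ℝ | ∃ A ∈ 𝒞, X - const Ω m ∈ A} (ρ X))
    (hconv : ∀ A ∈ 𝒞, IsAcceptanceSet A ∧ Convex ℝ A)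
    (X : Ω →ᵇ ℝ) (l : ℝ) (hl : 1 < l) : l * ρ X ≤ ρ (l • X) := by
  obtain ⟨A, hA𝒞, hmem⟩ := (hrep (l • X)).1
  set r := ρ (l • X) with hr
  have hl0 : (0:ℝ) < l := lt_trans one_pos hl
  have key : ∀ ε : ℝ, 0 < ε → ρ X ≤ r / l + ε := by
    intro ε hε
    obtain ⟨hacc, hcvx⟩ := hconv A hA𝒞
    -- get a constant m ∈ A with -ε < m ≤ 0
    obtain ⟨m, hmA, hmε, hm0⟩ := hacc.1.exists_between (by linarith : -ε < (0:ℝ))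
    have ht : (0:ℝ) ≤ 1 / l := le_of_lt (by positivity)
    have ht1 : 1 / l ≤ 1 := by
      rw [div_le_one hl0]; linarith
    have hsum : (1:ℝ) - 1/l ≥ 0 := by linarith
    have hcomb := hcvx hmem hmA ht hsum (by ring)
    have he : (1/l) • (l • X - const Ω r) + (1 - 1/l) • (const Ω m)
        = X - const Ω (r / l - (1 - 1/l) * m) := by
      ext ω
      simp
      field_simp
      ring
    rw [he] at hcomb
    have := (hrep X).2 ⟨A, hA𝒞, hcomb⟩
    have hub : -(1 - 1/l) * m ≤ (1 - 1/l) * ε := by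
      nlinarith
    calc ρ X ≤ r / l - (1 - 1/l) * m := this
      _ ≤ r / l + (1 - 1/l) * ε := by nlinarith
      _ ≤ r / l + ε := by nlinarith
  have : ρ X ≤ r / l := le_of_forall_pos_le_add key
  calc l * ρ X ≤ l * (r / l) := by nlinarith
    _ = r := by field_simp

end Aux

theorem star_shaped_iff_union_of_convex_acceptance_sets
    {Ω : Type*} [TopologicalSpace Ω] [DiscreteTopology Ω] [Nonempty Ω]
    (ρ : (Ω →ᵇ ℝ) → ℝ) (hρ : IsRiskMeasure ρ) :
    (IsStarShaped ρ ↔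
      ∃ 𝒞 : Set (Set (Ω →ᵇ ℝ)),
        (∀ A ∈ 𝒞, IsAcceptanceSet A ∧ Convex ℝ A) ∧
        ∀ X : Ω →ᵇ ℝ,
          IsLeast {m : ℝ | ∃ A ∈ 𝒞, X - const Ω m ∈ A} (ρ X)) ∧
    (IsPositivelyHomogeneous ρ ↔
      ∃ 𝒞 : Set (Set (Ω →ᵇ ℝ)),
        (∀ A ∈ 𝒞, IsAcceptanceSet A ∧ Convex ℝ A ∧ IsCone A) ∧
        ∀ X : Ω →ᵇ ℝ,
          IsLeast {m : ℝ | ∃ A ∈ 𝒞, X - const Ω m ∈ A} (ρ X)) := by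
  constructor
  · -- star-shaped part
    constructor
    · intro hs
      set W : (Ω →ᵇ ℝ) → (Ω →ᵇ ℝ) := fun Z => Z - const Ω (ρ Z) with hWdef
      set A : (Ω →ᵇ ℝ) → Set (Ω →ᵇ ℝ) :=
        fun Z => {X | ∃ t : ℝ, 0 ≤ t ∧ t ≤ 1 ∧ X ≤ t • W Z} with hAdef
      have hWρ : ∀ Z, ρ (W Z) = 0 := fun Z => rho_self_sub ρ hρ Z
      have hAnonpos : ∀ Z : Ω →ᵇ ℝ, ∀ X ∈ A Z, ρ X ≤ 0 := by
        rintro Z X ⟨t, ht0, ht1, hle⟩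
        exact le_trans (hρ.1 _ _ hle) (rho_smul_nonpos ρ hρ hs (W Z) (hWρ Z) ht0 ht1)
      refine ⟨Set.range A, ?_, ?_⟩
      · rintro B ⟨Z, rfl⟩
        refine ⟨⟨?_, ?_⟩, ?_⟩
        · -- IsLUB
          constructor
          · rintro m ⟨t, ht0, ht1, hle⟩
            have := hAnonpos Z (const Ω m) ⟨t, ht0, ht1, hle⟩
            rwa [rho_const ρ hρ] at this
          · intro b hb
            exact hb ⟨0, le_refl 0, zero_le_one, by
              rw [zero_smul]; intro ω; simp⟩
        · rintro X ⟨t, ht0, ht1, hle⟩ Y hYX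
          exact ⟨t, ht0, ht1, le_trans hYX hle⟩
        · -- convex
          rintro X₁ ⟨t₁, h10, h11, hle₁⟩ X₂ ⟨t₂, h20, h21, hle₂⟩ a b ha hb hab
          refine ⟨a * t₁ + b * t₂, by positivity, by nlinarith, ?_⟩
          intro ω
          have h1 : X₁ ω ≤ t₁ * (W Z) ω := by simpa using hle₁ ω
          have h2 : X₂ ω ≤ t₂ * (W Z) ω := by simpa using hle₂ ω
          show (a • X₁ + b • X₂) ω ≤ ((a * t₁ + b * t₂) • W Z) ω
          simp only [coe_add, coe_smul, Pi.add_apply, Pi.smul_apply, smul_eq_mul]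
          nlinarith
      · intro X
        constructor
        · exact ⟨A X, ⟨X, rfl⟩, ⟨1, zero_le_one, le_refl 1, by rw [one_smul]⟩⟩
        · rintro m ⟨B, ⟨Z, rfl⟩, hmem⟩
          have := hAnonpos Z _ hmem
          rw [hρ.2.1] at this
          linarith
    · rintro ⟨𝒞, hconv, hrep⟩ X l hl
      exact conv_step ρ 𝒞 hrep hconv X l hl
  · -- positively homogeneous part
    constructor
    · intro hph
      set W : (Ω →ᵇ ℝ) → (Ω →ᵇ ℝ) := fun Z => Z - const Ω (ρ Z) with hWdef
      set A : (Ω →ᵇ ℝ) → Set (Ω →ᵇ ℝ) :=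
        fun Z => {X | ∃ t : ℝ, 0 ≤ t ∧ X ≤ t • W Z} with hAdef
      have hWρ : ∀ Z, ρ (W Z) = 0 := fun Z => rho_self_sub ρ hρ Z
      have hWnonpos : ∀ Z : Ω →ᵇ ℝ, ∀ t : ℝ, 0 ≤ t → ρ (t • W Z) ≤ 0 := by
        intro Z t ht
        rcases eq_or_lt_of_le ht with h0 | h0
        · rw [← h0, zero_smul, hρ.2.2]
        · rw [hph (W Z) t h0, hWρ Z, mul_zero]
      have hAnonpos : ∀ Z : Ω →ᵇ ℝ, ∀ X ∈ A Z, ρ X ≤ 0 := by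
        rintro Z X ⟨t, ht0, hle⟩
        exact le_trans (hρ.1 _ _ hle) (hWnonpos Z t ht0)
      refine ⟨Set.range A, ?_, ?_⟩
      · rintro B ⟨Z, rfl⟩
        refine ⟨⟨?_, ?_⟩, ?_, ?_⟩
        · constructor
          · rintro m ⟨t, ht0, hle⟩
            have := hAnonpos Z (const Ω m) ⟨t, ht0, hle⟩
            rwa [rho_const ρ hρ] at this
          · intro b hb
            exact hb ⟨0, le_refl 0, by rw [zero_smul]; intro ω; simp⟩
        · rintro X ⟨t, ht0, hle⟩ Y hYX
          exact ⟨t, ht0, le_trans hYX hle⟩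
        · -- convex
          rintro X₁ ⟨t₁, h10, hle₁⟩ X₂ ⟨t₂, h20, hle₂⟩ a b ha hb hab
          refine ⟨a * t₁ + b * t₂, by positivity, ?_⟩
          intro ω
          have h1 : X₁ ω ≤ t₁ * (W Z) ω := by simpa using hle₁ ω
          have h2 : X₂ ω ≤ t₂ * (W Z) ω := by simpa using hle₂ ω
          show (a • X₁ + b • X₂) ω ≤ ((a * t₁ + b * t₂) • W Z) ω
          simp only [coe_add, coe_smul, Pi.add_apply, Pi.smul_apply, smul_eq_mul]
          nlinarith
        · -- cone
          rintro X ⟨t, ht0, hle⟩ c hc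
          refine ⟨c * t, by positivity, ?_⟩
          intro ω
          have h1 : X ω ≤ t * (W Z) ω := by simpa using hle ω
          show (c • X) ω ≤ ((c * t) • W Z) ω
          simp only [coe_smul, Pi.smul_apply, smul_eq_mul]
          nlinarith
      · intro X
        constructor
        · exact ⟨A X, ⟨X, rfl⟩, ⟨1, zero_le_one, by rw [one_smul]⟩⟩
        · rintro m ⟨B, ⟨Z, rfl⟩, hmem⟩
          have := hAnonpos Z _ hmem
          rw [hρ.2.1] at this
          linarith
    · rintro ⟨𝒞, hprop, hrep⟩ X l hl
      have hl0 : l ≠ 0 := ne_of_gt hl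
      -- ρ (l • X) ≤ l * ρ X
      obtain ⟨A, hA𝒞, hmem⟩ := (hrep X).1
      have hcone := (hprop A hA𝒞).2.2
      have h1 : l • (X - const Ω (ρ X)) ∈ A := hcone _ hmem l (le_of_lt hl)
      have he1 : l • (X - const Ω (ρ X)) = l • X - const Ω (l * ρ X) := by
        ext ω; simp; ring
      rw [he1] at h1
      have hle1 : ρ (l • X) ≤ l * ρ X := (hrep (l • X)).2 ⟨A, hA𝒞, h1⟩
      -- l * ρ X ≤ ρ (l • X)
      obtain ⟨A', hA'𝒞, hmem'⟩ := (hrep (l • X)).1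
      have hcone' := (hprop A' hA'𝒞).2.2
      have h2 : (1/l) • (l • X - const Ω (ρ (l • X))) ∈ A' :=
        hcone' _ hmem' (1/l) (le_of_lt (by positivity))
      have he2 : (1/l) • (l • X - const Ω (ρ (l • X))) = X - const Ω (ρ (l • X) / l) := by
        ext ω; simp; field_simp
      rw [he2] at h2
      have hle2 : ρ X ≤ ρ (l • X) / l := (hrep X).2 ⟨A', hA'𝒞, h2⟩
      have : l * ρ X ≤ ρ (l • X) := (le_div_iff₀' hl).mp hle2
      linarith
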